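/- Let F(z) = z²/2 − 2z + log z. For t ∈ [0,2], the derivative with respect to t of Re(F(1 + t·e^{2πi/3})) equals (1/2)·t²(2−t)/(1 − t + t²), and hence is nonnegative; in particular t ↦ Re(F(1 + t·e^{2πi/3})) is monotone nondecreasing on [0,2]. -/

import Mathlib

open Complex Real

noncomputable def Gaux : ℝ → ℝ :=
  fun t => (1 - t - t ^ 2 / 2) / 2 - 2 + t + (1 / 2) * Real.log (1 - t + t ^ 2)

lemma denom_pos (t : ℝ) : (0:ℝ) < 1 - t + t ^ 2 := by nlinarith [sq_nonneg (t - 1/2)]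

lemma Gaux_hasDerivAt (t : ℝ) :
    HasDerivAt Gaux ((1 / 2) * t ^ 2 * (2 - t) / (1 - t + t ^ 2)) t := by
  have hd := denom_pos t
  have hp : HasDerivAt (fun t : ℝ => 1 - t + t ^ 2) (2 * t - 1) t := by
    have h1 := ((hasDerivAt_id t).const_sub 1).add (hasDerivAt_pow 2 t)
    exact h1.congr_deriv (by push_cast; ring)
  have hlog : HasDerivAt (fun t : ℝ => Real.log (1 - t + t ^ 2))
      ((1 - t + t ^ 2)⁻¹ * (2 * t - 1)) t :=
    by exact (Real.hasDerivAt_log hd.ne').comp t hp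
  have hpoly : HasDerivAt (fun t : ℝ => (1 - t - t ^ 2 / 2) / 2 - 2 + t)
      ((0 - 1 - 2 * t / 2) / 2 - 0 + 1) t := by
    have h0 : HasDerivAt (fun t : ℝ => t ^ 2) (2 * t) t := by
      simpa using hasDerivAt_pow 2 t
    exact ((((hasDerivAt_const t (1:ℝ)).sub (hasDerivAt_id t)).sub (h0.div_const 2)).div_const
      2 |>.sub (hasDerivAt_const t 2)).add (hasDerivAt_id t)
  have := hpoly.add (hlog.const_mul (1/2))
  refine this.congr_deriv ?_
  field_simp
  ring

lemma g_eq (F : ℂ → ℂ) (hF : ∀ z : ℂ, F z = z ^ 2 / 2 - 2 * z + Complex.log z)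
    (g : ℝ → ℝ)
    (hg : ∀ t : ℝ, g t =
      (F (1 + (t : ℂ) * Complex.exp (((2 * Real.pi / 3 : ℝ) : ℂ) * Complex.I))).re) :
    g = Gaux := by
  funext t
  have hc : Real.cos (2 * Real.pi / 3) = -(1/2) := by
    rw [show (2 * Real.pi / 3) = Real.pi - Real.pi / 3 by ring, Real.cos_pi_sub,
      Real.cos_pi_div_three]
  have hs : Real.sin (2 * Real.pi / 3) = Real.sqrt 3 / 2 := by
    rw [show (2 * Real.pi / 3) = Real.pi - Real.pi / 3 by ring, Real.sin_pi_sub,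
      Real.sin_pi_div_three]
  set z : ℂ := 1 + (t : ℂ) * Complex.exp (((2 * Real.pi / 3 : ℝ) : ℂ) * Complex.I) with hz
  have her : (Complex.exp (((2 * Real.pi / 3 : ℝ) : ℂ) * Complex.I)).re
      = Real.cos (2 * Real.pi / 3) := Complex.exp_ofReal_mul_I_re _
  have hei : (Complex.exp (((2 * Real.pi / 3 : ℝ) : ℂ) * Complex.I)).im
      = Real.sin (2 * Real.pi / 3) := Complex.exp_ofReal_mul_I_im _
  have hre : z.re = 1 - t / 2 := by
    rw [hz]
    simp only [Complex.add_re, Complex.mul_re, Complex.one_re, Complex.ofReal_re,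
      Complex.ofReal_im, her, hei, hc]
    ring
  have him : z.im = t * (Real.sqrt 3 / 2) := by
    rw [hz]
    simp only [Complex.add_im, Complex.mul_im, Complex.one_im, Complex.ofReal_re,
      Complex.ofReal_im, her, hei, hs]
    ring
  have hsq : ‖z‖ ^ 2 = 1 - t + t ^ 2 := by
    rw [Complex.sq_norm, Complex.normSq_apply, hre, him]
    have h3 : Real.sqrt 3 ^ 2 = 3 := Real.sq_sqrt (by norm_num)
    nlinarith [h3]
  have habs : ‖z‖ = Real.sqrt (1 - t + t ^ 2) := by
    rw [← hsq, Real.sqrt_sq (norm_nonneg z)]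
  have hlogre : (Complex.log z).re = (1/2) * Real.log (1 - t + t ^ 2) := by
    rw [Complex.log_re, habs, Real.log_sqrt (denom_pos t).le]
    ring
  rw [hg t, hF z]
  have : (z ^ 2 / 2 - 2 * z + Complex.log z).re
      = (z.re ^ 2 - z.im ^ 2) / 2 - 2 * z.re + (Complex.log z).re := by
    simp [Complex.add_re, Complex.sub_re, Complex.div_re, Complex.mul_re, sq,
      Complex.normSq_apply]
  rw [this, hre, him, hlogre, Gaux]
  have h3 : Real.sqrt 3 ^ 2 = 3 := Real.sq_sqrt (by norm_num)
  nlinarith [h3]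

/-- For `F z = z²/2 − 2z + log z` and `g t = Re (F (1 + t e^{2πi/3}))`, for `t ∈ [0,2]`
the derivative of `g` at `t` equals `(1/2) t² (2−t)/(1−t+t²)`, is nonnegative, and `g`
is monotone nondecreasing on `[0,2]`. -/
theorem stmt_1 (F : ℂ → ℂ) (hF : ∀ z : ℂ, F z = z ^ 2 / 2 - 2 * z + Complex.log z)
    (g : ℝ → ℝ)
    (hg : ∀ t : ℝ, g t =
      (F (1 + (t : ℂ) * Complex.exp (((2 * Real.pi / 3 : ℝ) : ℂ) * Complex.I))).re) :
    (∀ t ∈ Set.Icc (0 : ℝ) 2,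
        HasDerivAt g ((1 / 2) * t ^ 2 * (2 - t) / (1 - t + t ^ 2)) t ∧
        0 ≤ (1 / 2) * t ^ 2 * (2 - t) / (1 - t + t ^ 2)) ∧
    MonotoneOn g (Set.Icc (0 : ℝ) 2) := by
  have hG : g = Gaux := g_eq F hF g hg
  subst hG
  have hnn : ∀ t ∈ Set.Icc (0 : ℝ) 2,
      0 ≤ (1 / 2) * t ^ 2 * (2 - t) / (1 - t + t ^ 2) := by
    intro t ht
    apply div_nonneg _ (denom_pos t).le
    have h1 : 0 ≤ 2 - t := by linarith [ht.2]
    positivity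
  constructor
  · exact fun t ht => ⟨Gaux_hasDerivAt t, hnn t ht⟩
  · apply monotoneOn_of_deriv_nonneg (convex_Icc 0 2)
    · exact fun t _ => (Gaux_hasDerivAt t).continuousAt.continuousWithinAt
    · exact fun t _ => (Gaux_hasDerivAt t).differentiableAt.differentiableWithinAt
    · intro t ht
      rw [interior_Icc] at ht
      rw [(Gaux_hasDerivAt t).deriv]
      exact hnn t ⟨ht.1.le, ht.2.le⟩
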